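/- Idempotent copyless assignments fix their nonempty register words as single-occurrence patterns: let R be a finite set and β : R → R* a copyless assignment with β • β = β. Then for every r ∈ R with β(r) ≠ ε, there exist ρ₀, ρ₁ ∈ R* such that β(r) = ρ₀ r ρ₁ (with exactly one occurrence of r) and β*(ρ₀) = β*(ρ₁) = ε, where β* : R* → R* is the monoid-morphism extension of β. -/

import Mathlib

/-- Copyless assignment over the empty output alphabet. -/
def Copyless0 {R : Type*} [Fintype R] [DecidableEq R] (α : R → List R) : Prop :=
  ∀ r : R, (∑ r' : R, List.count r (α r')) ≤ 1

theorem idempotent_copyless_fixed_register {R : Type*} [Fintype R] [DecidableEq R]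
    (β : R → List R) (hcl : Copyless0 β)
    (hidem : ∀ r : R, (β r).flatMap β = β r) :
    ∀ r : R, β r ≠ [] →
      ∃ ρ₀ ρ₁ : List R, β r = ρ₀ ++ [r] ++ ρ₁ ∧
        ρ₀.count r = 0 ∧ ρ₁.count r = 0 ∧
        ρ₀.flatMap β = [] ∧ ρ₁.flatMap β = [] := by
  classical
  set S : Finset R := Finset.univ.filter (fun r => β r ≠ []) with hS
  have hmemS : ∀ r, r ∈ S ↔ β r ≠ [] := by
    intro r; simp [hS]
  -- each s ∈ S contains an element of S
  have hA : ∀ s ∈ S, ∃ t ∈ S, t ∈ β s := by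
    intro s hs
    by_contra h
    push_neg at h
    have : ∀ t ∈ β s, β t = [] := by
      intro t ht
      by_contra ht'
      exact ((hmemS t).mpr ht' |> h t) ht
    have : (β s).flatMap β = [] := List.flatMap_eq_nil_iff.mpr this
    rw [hidem s] at this
    exact (hmemS s).mp hs this
  -- the count function
  set c : R → ℕ := fun s => ∑ t ∈ S, (β s).count t with hc
  have hc1 : ∀ s ∈ S, 1 ≤ c s := by
    intro s hs
    obtain ⟨t, htS, htm⟩ := hA s hs
    calc 1 ≤ (β s).count t := List.one_le_count_iff.mpr htm
    _ ≤ c s := Finset.single_le_sum (f := fun t' => (β s).count t')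
          (fun i _ => Nat.zero_le _) htS
  have hsum : ∑ s ∈ S, c s ≤ S.card := by
    rw [Finset.sum_comm]
    calc ∑ t ∈ S, ∑ s ∈ S, (β s).count t
        ≤ ∑ t ∈ S, 1 := by
          apply Finset.sum_le_sum
          intro t _
          calc ∑ s ∈ S, (β s).count t ≤ ∑ s : R, (β s).count t :=
                Finset.sum_le_sum_of_subset (Finset.subset_univ S)
          _ ≤ 1 := hcl t
    _ = S.card := by simp
  have hceq : ∀ s ∈ S, c s = 1 := by
    intro s hs
    by_contra h
    have h2 : 1 < c s := lt_of_le_of_ne (hc1 s hs) (Ne.symm h)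
    have : ∑ _s ∈ S, 1 < ∑ s ∈ S, c s :=
      Finset.sum_lt_sum (fun i hi => hc1 i hi) ⟨s, hs, h2⟩
    simp only [Finset.sum_const, smul_eq_mul, mul_one] at this
    omega
  -- structure lemma
  have hstruct : ∀ s ∈ S, ∃ t ∈ S, ∃ ρ₀ ρ₁ : List R,
      β s = ρ₀ ++ t :: ρ₁ ∧ (∀ u ∈ ρ₀, β u = []) ∧ (∀ u ∈ ρ₁, β u = []) := by
    intro s hs
    obtain ⟨t, htS, htm⟩ := hA s hs
    obtain ⟨ρ₀, ρ₁, hsplit⟩ := List.append_of_mem htm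
    refine ⟨t, htS, ρ₀, ρ₁, hsplit, ?_, ?_⟩
    · intro u hu
      by_contra hu'
      have huS : u ∈ S := (hmemS u).mpr hu'
      have h1 : 1 ≤ ∑ t' ∈ S, ρ₀.count t' :=
        le_trans (List.one_le_count_iff.mpr hu)
          (Finset.single_le_sum (f := fun t' => ρ₀.count t') (fun i _ => Nat.zero_le _) huS)
      have h2 : 1 ≤ ∑ t' ∈ S, (t :: ρ₁).count t' := by
        refine le_trans ?_ (Finset.single_le_sum (f := fun t' => (t :: ρ₁).count t')
          (fun i _ => Nat.zero_le _) htS)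
        simp [List.count_cons]
      have : 2 ≤ c s := by
        have : c s = (∑ t' ∈ S, ρ₀.count t') + ∑ t' ∈ S, (t :: ρ₁).count t' := by
          rw [hc]
          simp only [hsplit, List.count_append]
          rw [Finset.sum_add_distrib]
        omega
      rw [hceq s hs] at this
      omega
    · intro u hu
      by_contra hu'
      have huS : u ∈ S := (hmemS u).mpr hu'
      have h1 : 1 ≤ ∑ t' ∈ S, ρ₁.count t' :=
        le_trans (List.one_le_count_iff.mpr hu)
          (Finset.single_le_sum (f := fun t' => ρ₁.count t') (fun i _ => Nat.zero_le _) huS)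
      have h2 : 1 ≤ ∑ t' ∈ S, (ρ₀ ++ [t]).count t' := by
        refine le_trans ?_ (Finset.single_le_sum (f := fun t' => (ρ₀ ++ [t]).count t')
          (fun i _ => Nat.zero_le _) htS)
        simp [List.count_append]
      have : 2 ≤ c s := by
        have : c s = (∑ t' ∈ S, (ρ₀ ++ [t]).count t') + ∑ t' ∈ S, ρ₁.count t' := by
          rw [hc]
          have : β s = (ρ₀ ++ [t]) ++ ρ₁ := by simp [hsplit]
          simp only [this, List.count_append]
          rw [Finset.sum_add_distrib]
        omega
      rw [hceq s hs] at this
      omega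
  -- choice function f : S → S
  choose f hfS ρL ρR hfsplit hfL hfR using hstruct
  -- β s = β (f s)
  have hval : ∀ s (hs : s ∈ S), β s = β (f s hs) := by
    intro s hs
    conv_lhs => rw [← hidem s, hfsplit s hs]
    have hL : (ρL s hs).flatMap β = [] := List.flatMap_eq_nil_iff.mpr (hfL s hs)
    have hR : (ρR s hs).flatMap β = [] := List.flatMap_eq_nil_iff.mpr (hfR s hs)
    simp [List.flatMap_append, hL, hR, List.flatMap_cons]
  -- injectivity via copylessness
  set F : {x // x ∈ S} → {x // x ∈ S} := fun x => ⟨f x.1 x.2, hfS x.1 x.2⟩ with hF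
  have hFinj : Function.Injective F := by
    rintro ⟨s₁, h₁⟩ ⟨s₂, h₂⟩ heq
    simp only [hF, Subtype.mk.injEq] at heq ⊢
    by_contra hne
    set t := f s₁ h₁ with ht
    have hm1 : t ∈ β s₁ := by rw [hfsplit s₁ h₁]; simp [ht]
    have hm2 : t ∈ β s₂ := by rw [hfsplit s₂ h₂, ← heq]; simp
    have : 2 ≤ ∑ r' : R, (β r').count t := by
      calc 2 ≤ (β s₁).count t + (β s₂).count t := by
            have := List.one_le_count_iff.mpr hm1
            have := List.one_le_count_iff.mpr hm2
            omega
      _ = ∑ r' ∈ ({s₁, s₂} : Finset R), (β r').count t := by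
            rw [Finset.sum_pair hne]
      _ ≤ ∑ r' : R, (β r').count t :=
            Finset.sum_le_sum_of_subset (Finset.subset_univ _)
    have := hcl t
    omega
  have hFsurj : Function.Surjective F := Finite.surjective_of_injective hFinj
  -- conclude
  intro r hr
  have hrS : r ∈ S := (hmemS r).mpr hr
  obtain ⟨⟨s, hs⟩, hFs⟩ := hFsurj ⟨r, hrS⟩
  have hfr : f s hs = r := by simpa [hF] using congrArg Subtype.val hFs
  refine ⟨ρL s hs, ρR s hs, ?_, ?_, ?_, ?_, ?_⟩
  · rw [← hfr, ← hval s hs, hfsplit s hs]; simp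
  · rw [List.count_eq_zero]
    intro hmem
    exact hr (hfL s hs r hmem)
  · rw [List.count_eq_zero]
    intro hmem
    exact hr (hfR s hs r hmem)
  · exact List.flatMap_eq_nil_iff.mpr (hfL s hs)
  · exact List.flatMap_eq_nil_iff.mpr (hfR s hs)
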